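/- Let ν be a σ-finite measure on a measurable space 𝒳, let h : 𝒳 → [0, ∞) and T : 𝒳 → ℝ^d be measurable, let W : ℝ^d → ℝ be twice continuously differentiable, and for θ ∈ ℝ^d write E_θ(x) := h(x)·exp(⟨θ, T(x)⟩ - W(θ)). Let Θ ⊆ ℝ^d be a convex set such that for every θ ∈ Θ one has ∫ E_θ dν = 1, and let P_θ denote the probability measure with density E_θ with respect to ν. Let θ* ∈ Θ and β > 0 be such that the open Euclidean ball B(θ*, 1/β) is contained in Θ, suppose ∇W(θ*) = ∫ T(x) dP_{θ*}(x) =: μ, and suppose ⟨v, ∇²W(θ) v⟩ ≤ λ‖v‖² for every θ ∈ Θ and v ∈ ℝ^d, where λ > 0. Then for every u ∈ ℝ^d with ‖u‖ < 1/β, ∫ exp(⟨u, T(x) - μ⟩) dP_{θ*}(x) ≤ exp(λ‖u‖²/2). -/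

import Mathlib

open MeasureTheory
open scoped ENNReal NNReal

-- Taylor-type bound: W(a+u) - W a - ⟪∇W a, u⟫ ≤ C/2 where C bounds Hessian along segment
lemma aux_taylor {d : ℕ} (W : EuclideanSpace ℝ (Fin d) → ℝ) (hW : ContDiff ℝ 2 W)
    (a u : EuclideanSpace ℝ (Fin d)) (C : ℝ)
    (hhess : ∀ t ∈ Set.Icc (0:ℝ) 1, fderiv ℝ (fderiv ℝ W) (a + t • u) u u ≤ C) :
    W (a + u) - W a - fderiv ℝ W a u ≤ C / 2 := by
  have hWdiff : Differentiable ℝ W := hW.differentiable (by norm_num)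
  have hW' : Differentiable ℝ (fderiv ℝ W) :=
    (hW.fderiv_right (m := 1) (by norm_num)).differentiable (by norm_num)
  have hline : ∀ t : ℝ, HasDerivAt (fun s : ℝ => a + s • u) u t := by
    intro t
    simpa using ((hasDerivAt_id t).smul_const u).const_add a
  set L : ℝ → ℝ := fun t => fderiv ℝ W (a + t • u) u with hLdef
  have hL : ∀ t : ℝ, HasDerivAt L (fderiv ℝ (fderiv ℝ W) (a + t • u) u u) t := by
    intro t
    have h1 : HasDerivAt (fun s : ℝ => fderiv ℝ W (a + s • u))
        (fderiv ℝ (fderiv ℝ W) (a + t • u) u) t :=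
      (hW' (a + t • u)).hasFDerivAt.comp_hasDerivAt t (hline t)
    simpa using h1.clm_apply (hasDerivAt_const t u)
  have hWline : ∀ t : ℝ, HasDerivAt (fun s : ℝ => W (a + s • u)) (L t) t := fun t =>
    (hWdiff (a + t • u)).hasFDerivAt.comp_hasDerivAt t (hline t)
  -- Step 1 : L t ≤ L 0 + C * t on [0,1]
  have hm : ∀ t : ℝ, HasDerivAt (fun s => L s - C * s)
      (fderiv ℝ (fderiv ℝ W) (a + t • u) u u - C) t := by
    intro t
    refine ((hL t).sub ((hasDerivAt_id' t).const_mul C)).congr_deriv ?_; ring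
  have hmanti : AntitoneOn (fun s => L s - C * s) (Set.Icc (0:ℝ) 1) := by
    apply antitoneOn_of_deriv_nonpos (convex_Icc 0 1)
    · exact fun t _ => ((hm t).differentiableAt.continuousAt).continuousWithinAt
    · intro t ht
      exact ((hm t).differentiableAt).differentiableWithinAt
    · intro t ht
      rw [interior_Icc] at ht
      rw [(hm t).deriv]
      have := hhess t ⟨le_of_lt ht.1, le_of_lt ht.2⟩
      linarith
  have hLle : ∀ t ∈ Set.Icc (0:ℝ) 1, L t ≤ L 0 + C * t := by
    intro t ht
    have := hmanti (Set.left_mem_Icc.2 one_pos.le) ht ht.1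
    simp only [mul_zero, sub_zero] at this
    linarith
  -- Step 2 : f t := W(a+t•u) - t * L 0 - C*t^2/2 is antitone
  have hf : ∀ t : ℝ, HasDerivAt (fun s : ℝ => W (a + s • u) - s * L 0 - C * s ^ 2 / 2)
      (L t - L 0 - C * t) t := by
    intro t
    have h2 : HasDerivAt (fun s : ℝ => C * s ^ 2 / 2) (C * t) t := by
      have := ((hasDerivAt_pow 2 t).const_mul C).div_const 2
      simpa using this.congr_deriv (by ring)
    refine (((hWline t).sub ((hasDerivAt_id' t).mul_const (L 0))).sub h2).congr_deriv ?_; ring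
  have hfanti : AntitoneOn (fun s : ℝ => W (a + s • u) - s * L 0 - C * s ^ 2 / 2)
      (Set.Icc (0:ℝ) 1) := by
    apply antitoneOn_of_deriv_nonpos (convex_Icc 0 1)
    · exact fun t _ => ((hf t).differentiableAt.continuousAt).continuousWithinAt
    · exact fun t _ => ((hf t).differentiableAt).differentiableWithinAt
    · intro t ht
      rw [interior_Icc] at ht
      rw [(hf t).deriv]
      have := hLle t ⟨le_of_lt ht.1, le_of_lt ht.2⟩
      linarith
  have := hfanti (Set.left_mem_Icc.2 one_pos.le) (Set.right_mem_Icc.2 one_pos.le) one_pos.le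
  simp only [one_smul, zero_smul, add_zero, one_mul, zero_mul, mul_zero, one_pow,
    mul_one, sub_zero] at this
  have hL0 : L 0 = fderiv ℝ W a u := by simp [hLdef]
  rw [hL0] at this
  linarith
open MeasureTheory
open scoped ENNReal NNReal

theorem stmt_14 {d : ℕ} {𝒳 : Type*} [MeasurableSpace 𝒳]
    (ν : Measure 𝒳) [SigmaFinite ν]
    (h : 𝒳 → ℝ) (hh_nonneg : ∀ x, 0 ≤ h x) (hh_meas : Measurable h)
    (T : 𝒳 → EuclideanSpace ℝ (Fin d)) (hT_meas : Measurable T)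
    (W : EuclideanSpace ℝ (Fin d) → ℝ) (hW : ContDiff ℝ 2 W)
    (E : EuclideanSpace ℝ (Fin d) → 𝒳 → ℝ)
    (hE : ∀ θ x, E θ x = h x * Real.exp ((inner ℝ θ (T x) : ℝ) - W θ))
    (Θ : Set (EuclideanSpace ℝ (Fin d))) (hΘ : Convex ℝ Θ)
    (hnorm : ∀ θ ∈ Θ, ∫ x, E θ x ∂ν = 1)
    (P : EuclideanSpace ℝ (Fin d) → Measure 𝒳)
    (hP : ∀ θ, P θ = ν.withDensity (fun x => ENNReal.ofReal (E θ x)))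
    (θs : EuclideanSpace ℝ (Fin d)) (hθs : θs ∈ Θ)
    (β : ℝ) (hβ : 0 < β) (hball : Metric.ball θs (1 / β) ⊆ Θ)
    (μ : EuclideanSpace ℝ (Fin d)) (hμ : μ = ∫ x, T x ∂(P θs))
    (hgrad : gradient W θs = μ)
    (lam : ℝ) (hlam : 0 < lam)
    (hhess : ∀ θ ∈ Θ, ∀ v : EuclideanSpace ℝ (Fin d),
      iteratedFDeriv ℝ 2 W θ ![v, v] ≤ lam * ‖v‖ ^ 2)
    (u : EuclideanSpace ℝ (Fin d)) (hu : ‖u‖ < 1 / β) :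
    ∫ x, Real.exp ((inner ℝ u (T x - μ) : ℝ)) ∂(P θs) ≤ Real.exp (lam * ‖u‖ ^ 2 / 2) := by
  -- membership of the segment in Θ
  have hmem : ∀ t ∈ Set.Icc (0:ℝ) 1, θs + t • u ∈ Θ := by
    intro t ht
    apply hball
    rw [Metric.mem_ball, dist_eq_norm, add_sub_cancel_left, norm_smul, Real.norm_eq_abs,
      abs_of_nonneg ht.1]
    calc t * ‖u‖ ≤ 1 * ‖u‖ := by
          exact mul_le_mul_of_nonneg_right ht.2 (norm_nonneg u)
      _ = ‖u‖ := one_mul _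
      _ < 1 / β := hu
  have hyΘ : θs + u ∈ Θ := by simpa using hmem 1 (Set.right_mem_Icc.2 one_pos.le)
  -- nonnegativity and measurability of densities
  have hE_nonneg : ∀ θ x, 0 ≤ E θ x := fun θ x => by
    rw [hE]; exact mul_nonneg (hh_nonneg x) (Real.exp_nonneg _)
  have hE_meas : ∀ θ, Measurable (E θ) := by
    intro θ
    have : E θ = fun x => h x * Real.exp ((inner ℝ θ (T x) : ℝ) - W θ) := funext (hE θ)
    rw [this]
    exact hh_meas.mul (((Measurable.inner measurable_const hT_meas).sub measurable_const).exp)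
  set c : ℝ := Real.exp (W (θs + u) - W θs - (inner ℝ u μ : ℝ)) with hc
  -- pointwise identity
  have key : ∀ x, E θs x * Real.exp ((inner ℝ u (T x - μ) : ℝ)) = c * E (θs + u) x := by
    intro x
    rw [hE, hE, hc, inner_sub_right, inner_add_left, mul_assoc, ← Real.exp_add,
      mul_comm (Real.exp _) _, mul_assoc, ← Real.exp_add]
    congr 1
    rw [Real.exp_eq_exp]
    ring
  -- the integral equals c
  have hint : ∫ x, Real.exp ((inner ℝ u (T x - μ) : ℝ)) ∂(P θs) = c := by
    rw [hP]
    rw [show (fun x => ENNReal.ofReal (E θs x)) = (fun x => ((E θs x).toNNReal : ℝ≥0∞)) from rfl]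
    rw [integral_withDensity_eq_integral_smul ((hE_meas θs).real_toNNReal)]
    have : (fun x => (E θs x).toNNReal • Real.exp ((inner ℝ u (T x - μ) : ℝ)))
        = fun x => c * E (θs + u) x := by
      funext x
      rw [NNReal.smul_def, Real.coe_toNNReal _ (hE_nonneg θs x)]
      exact key x
    rw [this, integral_const_mul, hnorm _ hyΘ, mul_one]
  rw [hint, hc]
  apply Real.exp_le_exp.mpr
  -- Taylor bound
  have hfd : fderiv ℝ W θs u = (inner ℝ μ u : ℝ) := by
    have := (hW.differentiable (by norm_num) θs).hasGradientAt
    rw [hgrad] at this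
    rw [this.hasFDerivAt.fderiv]
    exact InnerProductSpace.toDual_apply_apply
  have htay := aux_taylor W hW θs u (lam * ‖u‖ ^ 2) ?hess
  case hess =>
    intro t ht
    have h2 := hhess _ (hmem t ht) u
    rwa [iteratedFDeriv_two_apply] at h2
    -- plus matrix simp maybe
  rw [hfd] at htay
  have hcomm : (inner ℝ u μ : ℝ) = inner ℝ μ u := real_inner_comm μ u
  linarith
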